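/- If Λ is a Λ-sequence and f : [0,1] → ℝ is continuous and of bounded Λ-variation, then ‖B_nf‖_Λ → ‖f‖_Λ as n → ∞. -/

import Mathlib

open Filter Set MeasureTheory
open scoped ENNReal Topology

/-- `l` is a Λ-sequence (indexed from 0, so `l 0` plays the role of `λ₁`):
a nondecreasing sequence of positive reals whose reciprocals have divergent sum. -/
def IsLambdaSeq (l : ℕ → ℝ) : Prop :=
  Monotone l ∧ (∀ n, 0 < l n) ∧ ¬ Summable (fun n => 1 / l n)

/-- A proper Λ-sequence: additionally `λₙ → ∞`. -/
def IsProperLambdaSeq (l : ℕ → ℝ) : Prop :=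
  IsLambdaSeq l ∧ Tendsto l atTop atTop

/-- The Λ-variation of `f` computed over partition points taken from `K`:
the supremum of `∑ⱼ |f(x_{j+1}) - f(x_j)| / λ_{β(j)}` over all `m`, all nondecreasing
tuples `x₁ ≤ … ≤ x_{m+1}` of points of `K` and all permutations `β` of the gaps. -/
noncomputable def lamVarOn (l : ℕ → ℝ) (f : ℝ → ℝ) (K : Set ℝ) : ℝ≥0∞ :=
  ⨆ (m : ℕ) (x : Fin (m + 1) → ℝ) (_ : Monotone x) (_ : ∀ j, x j ∈ K)
    (β : Equiv.Perm (Fin m)),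
    ∑ j : Fin m, ENNReal.ofReal (|f (x j.succ) - f (x j.castSucc)| / l (β j))

/-- The Λ-variation of `f : [0,1] → ℝ`. -/
noncomputable def lamVar (l : ℕ → ℝ) (f : ℝ → ℝ) : ℝ≥0∞ :=
  lamVarOn l f (Set.Icc 0 1)

/-- The norm `‖f‖_Λ = V_Λ(f) + |f 0|` (valued in `[0,∞]`). -/
noncomputable def lamNorm (l : ℕ → ℝ) (f : ℝ → ℝ) : ℝ≥0∞ :=
  lamVar l f + ENNReal.ofReal |f 0|

/-- `f` is continuous in Λ-variation: `V_{Λ_(m)}(f) → 0` as `m → ∞`. -/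
def ContInLamVar (l : ℕ → ℝ) (f : ℝ → ℝ) : Prop :=
  Tendsto (fun m => lamVar (fun n => l (n + m)) f) atTop (𝓝 0)

/-- The restricted Λ-variation `V_{Λ,δ}(f)`: the supremum of `∑ⱼ |f(bⱼ) - f(aⱼ)| / λⱼ`
over all finite sequences of nonoverlapping closed subintervals `[aⱼ, bⱼ]` of `[0,1]`
of length at most `δ`, listed in any order. -/
noncomputable def lamVarDelta (l : ℕ → ℝ) (δ : ℝ) (f : ℝ → ℝ) : ℝ≥0∞ :=
  ⨆ (k : ℕ) (a : Fin k → ℝ) (b : Fin k → ℝ)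
    (_ : ∀ j, 0 ≤ a j ∧ a j ≤ b j ∧ b j ≤ 1 ∧ b j - a j ≤ δ)
    (_ : ∀ i j, i ≠ j → b i ≤ a j ∨ b j ≤ a i),
    ∑ j : Fin k, ENNReal.ofReal (|f (b j) - f (a j)| / l j)

/-- The `n`-th Bernstein polynomial of `f : [0,1] → ℝ`. -/
noncomputable def bern (n : ℕ) (f : ℝ → ℝ) (x : ℝ) : ℝ :=
  ∑ k ∈ Finset.range (n + 1),
    f ((k : ℝ) / n) * (n.choose k : ℝ) * x ^ k * (1 - x) ^ (n - k)

/-- The `n`-th Kantorovich polynomial of `f : [0,1] → ℝ`. -/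
noncomputable def kant (n : ℕ) (f : ℝ → ℝ) (x : ℝ) : ℝ :=
  ∑ k ∈ Finset.range (n + 1),
    (n.choose k : ℝ) * x ^ k * (1 - x) ^ (n - k) *
      ((n + 1) * ∫ t in ((k : ℝ) / (n + 1))..(((k : ℝ) + 1) / (n + 1)), f t)


/-! ### Auxiliary material for Statement 9 -/

section BernLamVarAux

open Finset
open scoped unitInterval

private lemma pascal_step (p t : ℝ) (g : ℕ → ℝ) (n : ℕ) :
    p * (∑ k ∈ range (n+1), (n.choose k : ℝ) * p^k * t^(n-k) * g (k+1))
      + t * (∑ k ∈ range (n+1), (n.choose k : ℝ) * p^k * t^(n-k) * g k)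
    = ∑ k ∈ range (n+1+1), ((n+1).choose k : ℝ) * p^k * t^(n+1-k) * g k := by
  rw [Finset.sum_range_succ' (fun k => ((n+1).choose k : ℝ) * p^k * t^(n+1-k) * g k) (n+1)]
  rw [Finset.mul_sum, Finset.mul_sum]
  -- reindex second LHS sum
  rw [Finset.sum_range_succ' (fun k => t * ((n.choose k : ℝ) * p^k * t^(n-k) * g k)) n]
  have h1 : ∀ k ∈ range (n+1),
      ((n+1).choose (k+1) : ℝ) * p^(k+1) * t^(n+1-(k+1)) * g (k+1)
        = (n.choose k : ℝ) * p^(k+1) * t^(n-k) * g (k+1)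
          + (n.choose (k+1) : ℝ) * p^(k+1) * t^(n-k) * g (k+1) := by
    intro k hk
    rw [Nat.choose_succ_succ, Nat.succ_sub_succ]
    push_cast
    ring
  rw [Finset.sum_congr rfl h1, Finset.sum_add_distrib]
  have h2 : ∀ k ∈ range (n+1), p * ((n.choose k : ℝ) * p^k * t^(n-k) * g (k+1))
      = (n.choose k : ℝ) * p^(k+1) * t^(n-k) * g (k+1) := by
    intro k hk; ring
  rw [Finset.sum_congr rfl h2]
  -- the (n.choose (k+1)) sum over range (n+1): last term vanishes
  rw [Finset.sum_range_succ (fun k => (n.choose (k+1) : ℝ) * p^(k+1) * t^(n-k) * g (k+1)) n]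
  simp only [Nat.choose_succ_self, Nat.cast_zero, zero_mul, add_zero]
  have h3 : ∀ k ∈ range n, t * ((n.choose (k+1) : ℝ) * p^(k+1) * t^(n-(k+1)) * g (k+1))
      = (n.choose (k+1) : ℝ) * p^(k+1) * t^(n-k) * g (k+1) := by
    intro k hk
    rw [Finset.mem_range] at hk
    have : n - k = (n - (k+1)) + 1 := by omega
    rw [this, pow_succ]
    ring
  rw [Finset.sum_congr rfl h3]
  simp only [Nat.choose_zero_right, Nat.cast_one, pow_zero, Nat.sub_zero]
  ring

lemma key_multinomial {A : Type*} [Fintype A] [DecidableEq A] (q : A → ℝ) (B : Finset A)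
    (n : ℕ) (g : ℕ → ℝ) :
    ∑ φ : Fin n → A, (∏ i, q (φ i)) * g ((Finset.univ.filter (fun i => φ i ∈ B)).card)
      = ∑ k ∈ Finset.range (n+1),
          (n.choose k : ℝ) * (∑ a ∈ B, q a)^k * (∑ a ∈ Bᶜ, q a)^(n-k) * g k := by
  induction n generalizing g with
  | zero =>
      simp
  | succ n ih =>
      let e : A × (Fin n → A) ≃ (Fin (n+1) → A) := Fin.consEquiv (fun _ => A)
      have he : ∀ (a : A) (φ : Fin n → A), e (a, φ) = (Fin.cons a φ : Fin (n+1) → A) := fun _ _ => rfl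
      rw [← Equiv.sum_comp e (fun φ : Fin (n+1) → A =>
        (∏ i, q (φ i)) * g ((Finset.univ.filter (fun i => φ i ∈ B)).card))]
      rw [Fintype.sum_prod_type]
      have hterm : ∀ (a : A) (φ : Fin n → A),
          (∏ i, q (e (a, φ) i)) * g ((Finset.univ.filter (fun i => e (a, φ) i ∈ B)).card)
          = q a * ((∏ i, q (φ i)) *
              g ((if a ∈ B then 1 else 0) + (Finset.univ.filter (fun i => φ i ∈ B)).card)) := by
        intro a φ
        rw [he]
        have hprod : (∏ i : Fin (n+1), q ((Fin.cons a φ : Fin (n+1) → A) i)) = q a * ∏ i : Fin n, q (φ i) := by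
          rw [Fin.prod_univ_succ]
          simp
        have hcard : (Finset.univ.filter (fun i : Fin (n+1) => (Fin.cons a φ : Fin (n+1) → A) i ∈ B)).card
            = (if a ∈ B then 1 else 0) + (Finset.univ.filter (fun i : Fin n => φ i ∈ B)).card := by
          rw [Finset.card_filter, Finset.card_filter, Fin.sum_univ_succ]
          simp
        rw [hprod, hcard]; ring
      simp only [hterm]
      have hpull : ∀ a : A, (∑ φ : Fin n → A, q a * ((∏ i, q (φ i)) *
            g ((if a ∈ B then 1 else 0) + (Finset.univ.filter (fun i => φ i ∈ B)).card)))
          = q a * ∑ φ : Fin n → A, ((∏ i, q (φ i)) *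
            g ((if a ∈ B then 1 else 0) + (Finset.univ.filter (fun i => φ i ∈ B)).card)) :=
        fun a => (Finset.mul_sum _ _ _).symm
      rw [Finset.sum_congr rfl (fun a _ => hpull a)]
      rw [← Finset.sum_add_sum_compl B]
      have hB : ∀ a ∈ B, q a * ∑ φ : Fin n → A, (∏ i, q (φ i)) *
            g ((if a ∈ B then 1 else 0) + (Finset.univ.filter (fun i => φ i ∈ B)).card)
          = q a * ∑ φ : Fin n → A, (∏ i, q (φ i)) *
            g ((Finset.univ.filter (fun i => φ i ∈ B)).card + 1) := by
        intro a ha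
        congr 1
        refine Finset.sum_congr rfl fun φ _ => ?_
        rw [if_pos ha, Nat.add_comm]
      have hBc : ∀ a ∈ Bᶜ, q a * ∑ φ : Fin n → A, (∏ i, q (φ i)) *
            g ((if a ∈ B then 1 else 0) + (Finset.univ.filter (fun i => φ i ∈ B)).card)
          = q a * ∑ φ : Fin n → A, (∏ i, q (φ i)) *
            g ((Finset.univ.filter (fun i => φ i ∈ B)).card) := by
        intro a ha
        rw [Finset.mem_compl] at ha
        congr 1
        refine Finset.sum_congr rfl fun φ _ => ?_
        rw [if_neg ha, Nat.zero_add]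
      rw [Finset.sum_congr rfl hB, Finset.sum_congr rfl hBc,
        ← Finset.sum_mul, ← Finset.sum_mul, ih (fun k => g (k+1)), ih g]
      exact pascal_step _ _ g n

section setup
variable {m : ℕ} (x : Fin (m+1) → ℝ)

/-- extension of the partition points by 0 on the left and 1 on the right -/
noncomputable def Xext (i : ℕ) : ℝ :=
  if i = 0 then 0 else if h : i ≤ m + 1 then x ⟨i - 1, by omega⟩ else 1

noncomputable def Qg (i : ℕ) : ℝ := Xext x (i + 1) - Xext x i

noncomputable def qgap (c : Fin (m+2)) : ℝ := Qg x (c : ℕ)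

lemma Xext_mono (hmono : Monotone x) (hmem : ∀ j, x j ∈ Set.Icc (0:ℝ) 1) :
    Monotone (Xext x) := by
  apply monotone_nat_of_le_succ
  intro i
  unfold Xext
  rcases Nat.eq_zero_or_pos i with rfl | hpos
  · rw [if_pos rfl, if_neg (by omega : (0:ℕ)+1 ≠ 0), dif_pos (by omega : (0:ℕ)+1 ≤ m+1)]
    exact (hmem _).1
  · rw [if_neg (by omega : i ≠ 0), if_neg (by omega : i+1 ≠ 0)]
    by_cases h1 : i + 1 ≤ m + 1
    · rw [dif_pos h1, dif_pos (by omega : i ≤ m+1)]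
      exact hmono (by simp only [Fin.mk_le_mk]; omega)
    · rw [dif_neg h1]
      by_cases h2 : i ≤ m+1
      · rw [dif_pos h2]
        exact (hmem _).2
      · rw [dif_neg h2]

lemma qgap_nonneg (hmono : Monotone x) (hmem : ∀ j, x j ∈ Set.Icc (0:ℝ) 1) (c : Fin (m+2)) :
    0 ≤ qgap x c :=
  sub_nonneg.mpr (Xext_mono x hmono hmem (Nat.le_succ _))

lemma Xext_zero : Xext x 0 = 0 := by simp [Xext]

lemma Xext_succ (j : Fin (m+1)) : Xext x ((j : ℕ) + 1) = x j := by
  have h1 : (j : ℕ) + 1 ≠ 0 := by omega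
  have h2 : (j : ℕ) + 1 ≤ m + 1 := by omega
  simp only [Xext, if_neg h1, dif_pos h2, Nat.add_sub_cancel]

lemma Xext_top : Xext x (m + 2) = 1 := by
  have h1 : m + 2 ≠ 0 := by omega
  have h2 : ¬ (m + 2 ≤ m + 1) := by omega
  simp [Xext, h1, h2]

lemma qgap_sum (j : Fin (m+1)) :
    ∑ c ∈ Finset.univ.filter (fun c : Fin (m+2) => (c : ℕ) ≤ (j : ℕ)), qgap x c = x j := by
  rw [Finset.sum_filter]
  rw [show (fun c : Fin (m+2) => if (c : ℕ) ≤ (j : ℕ) then qgap x c else 0)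
     = (fun c : Fin (m+2) => (fun i : ℕ => if i ≤ (j : ℕ) then Qg x i else 0) (c : ℕ)) from rfl]
  rw [Fin.sum_univ_eq_sum_range (fun i : ℕ => if i ≤ (j : ℕ) then Qg x i else 0) (m+2)]
  rw [← Finset.sum_filter]
  have hfilter : (Finset.range (m+2)).filter (fun i => i ≤ (j : ℕ)) = Finset.range ((j : ℕ) + 1) := by
    ext i
    simp only [Finset.mem_filter, Finset.mem_range]
    have := j.isLt
    omega
  rw [hfilter]
  have := Finset.sum_range_sub (Xext x) ((j : ℕ) + 1)
  simp only [Qg]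
  rw [this, Xext_zero, Xext_succ, sub_zero]

lemma qgap_total : ∑ c : Fin (m+2), qgap x c = 1 := by
  rw [show (fun c : Fin (m+2) => qgap x c) = (fun c : Fin (m+2) => Qg x (c : ℕ)) from rfl]
  rw [Fin.sum_univ_eq_sum_range (fun i : ℕ => Qg x i) (m+2)]
  simp only [Qg]
  rw [Finset.sum_range_sub (Xext x) (m+2), Xext_zero, Xext_top, sub_zero]

lemma qgap_sum_compl (j : Fin (m+1)) :
    ∑ c ∈ (Finset.univ.filter (fun c : Fin (m+2) => (c : ℕ) ≤ (j : ℕ)))ᶜ, qgap x c = 1 - x j := by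
  have h := Finset.sum_add_sum_compl
    (Finset.univ.filter (fun c : Fin (m+2) => (c : ℕ) ≤ (j : ℕ))) (qgap x)
  rw [qgap_sum x j, qgap_total x] at h
  linarith

end setup

noncomputable def wgt {m : ℕ} (x : Fin (m+1) → ℝ) (n : ℕ) (φ : Fin n → Fin (m+2)) : ℝ :=
  ∏ i, qgap x (φ i)

def cnt {m n : ℕ} (φ : Fin n → Fin (m+2)) (j : Fin (m+1)) : ℕ :=
  (Finset.univ.filter (fun i => (φ i : ℕ) ≤ (j : ℕ))).card

lemma wgt_nonneg {m : ℕ} (x : Fin (m+1) → ℝ) (hmono : Monotone x)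
    (hmem : ∀ j, x j ∈ Set.Icc (0:ℝ) 1) (n : ℕ) (φ : Fin n → Fin (m+2)) :
    0 ≤ wgt x n φ :=
  Finset.prod_nonneg fun i _ => qgap_nonneg x hmono hmem (φ i)

lemma wgt_sum {m : ℕ} (x : Fin (m+1) → ℝ) (n : ℕ) :
    ∑ φ : Fin n → Fin (m+2), wgt x n φ = 1 := by
  have h := key_multinomial (qgap x) (Finset.univ : Finset (Fin (m+2))) n (fun _ => (1:ℝ))
  simp only [Finset.mem_univ, mul_one, Finset.compl_univ, Finset.sum_empty] at h
  rw [qgap_total x] at h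
  have h2 : ((1:ℝ) + 0)^n = ∑ k ∈ Finset.range (n+1), (1:ℝ)^k * 0^(n-k) * (n.choose k : ℕ) :=
    add_pow 1 0 n
  simp only [wgt]
  rw [h]
  rw [show (∑ k ∈ Finset.range (n+1), (n.choose k : ℝ) * 1^k * 0^(n-k))
    = ∑ k ∈ Finset.range (n+1), (1:ℝ)^k * 0^(n-k) * (n.choose k : ℕ) from
      Finset.sum_congr rfl fun k _ => by push_cast; ring]
  rw [← h2]
  norm_num

lemma bern_repr (f : ℝ → ℝ) (n : ℕ) {m : ℕ} (x : Fin (m+1) → ℝ) (hmono : Monotone x)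
    (hmem : ∀ j, x j ∈ Set.Icc (0:ℝ) 1) (j : Fin (m+1)) :
    bern n f (x j) = ∑ φ : Fin n → Fin (m+2), wgt x n φ * f ((cnt φ j : ℝ) / n) := by
  have h := key_multinomial (qgap x)
      (Finset.univ.filter (fun c : Fin (m+2) => (c:ℕ) ≤ (j:ℕ))) n (fun k => f ((k : ℝ)/n))
  rw [qgap_sum x j, qgap_sum_compl x j] at h
  simp only [Finset.mem_filter, Finset.mem_univ, true_and] at h
  rw [show (∑ φ : Fin n → Fin (m+2), wgt x n φ * f ((cnt φ j : ℝ) / n))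
      = ∑ φ : Fin n → Fin (m+2), (∏ i, qgap x (φ i)) *
          f (((Finset.univ.filter (fun i => (φ i : ℕ) ≤ (j:ℕ))).card : ℝ) / n) from rfl]
  rw [h, bern]
  refine Finset.sum_congr rfl fun k _ => by ring

lemma cnt_mono {m n : ℕ} (φ : Fin n → Fin (m+2)) : Monotone (cnt φ) := by
  intro j j' hj
  apply Finset.card_le_card
  intro i hi
  simp only [Finset.mem_filter, Finset.mem_univ, true_and] at *
  exact le_trans hi hj

lemma cnt_le {m n : ℕ} (φ : Fin n → Fin (m+2)) (j : Fin (m+1)) : cnt φ j ≤ n := by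
  calc cnt φ j ≤ (Finset.univ : Finset (Fin n)).card := Finset.card_le_card (Finset.filter_subset _ _)
  _ = n := by simp

noncomputable def Ypt {m n : ℕ} (φ : Fin n → Fin (m+2)) (j : Fin (m+1)) : ℝ := (cnt φ j : ℝ) / n

lemma Ypt_mono {m n : ℕ} (φ : Fin n → Fin (m+2)) : Monotone (Ypt φ) := by
  intro j j' hj
  unfold Ypt
  rw [div_eq_mul_inv, div_eq_mul_inv]
  exact mul_le_mul_of_nonneg_right (by exact_mod_cast cnt_mono φ hj) (by positivity)

lemma Ypt_mem {m n : ℕ} (φ : Fin n → Fin (m+2)) (j : Fin (m+1)) :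
    Ypt φ j ∈ Set.Icc (0:ℝ) 1 := by
  unfold Ypt
  constructor
  · positivity
  · rcases Nat.eq_zero_or_pos n with rfl | hn
    · norm_num
    · rw [div_le_one (by positivity)]
      exact_mod_cast cnt_le φ j

lemma partition_sum_le (l : ℕ → ℝ) (hlpos : ∀ i, 0 < l i) (f : ℝ → ℝ) (hf : lamVar l f ≠ ⊤)
    {m : ℕ} (y : Fin (m+1) → ℝ) (hmono : Monotone y) (hmem : ∀ j, y j ∈ Set.Icc (0:ℝ) 1)
    (β : Equiv.Perm (Fin m)) :
    ∑ j : Fin m, |f (y j.succ) - f (y j.castSucc)| / l (β j) ≤ (lamVar l f).toReal := by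
  have h1 : ENNReal.ofReal (∑ j : Fin m, |f (y j.succ) - f (y j.castSucc)| / l (β j))
      ≤ lamVar l f := by
    rw [ENNReal.ofReal_sum_of_nonneg (fun j _ => div_nonneg (abs_nonneg _) (hlpos _).le)]
    unfold lamVar lamVarOn
    exact le_iSup_of_le m (le_iSup_of_le y (le_iSup_of_le hmono
      (le_iSup_of_le hmem (le_iSup_of_le β le_rfl))))
  exact (ENNReal.ofReal_le_iff_le_toReal hf).mp h1

lemma lamVar_bern_le (l : ℕ → ℝ) (hlpos : ∀ i, 0 < l i) (f : ℝ → ℝ)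
    (hf : lamVar l f ≠ ⊤) (n : ℕ) :
    lamVar l (bern n f) ≤ lamVar l f := by
  conv_lhs => rw [lamVar, lamVarOn]
  refine iSup_le fun m => iSup_le fun x => iSup_le fun hmono => iSup_le fun hmem =>
    iSup_le fun β => ?_
  rw [← ENNReal.ofReal_sum_of_nonneg
    (fun j _ => div_nonneg (abs_nonneg _) (hlpos _).le)]
  apply ENNReal.ofReal_le_of_le_toReal
  have hwnn : ∀ φ : Fin n → Fin (m+2), 0 ≤ wgt x n φ := wgt_nonneg x hmono hmem n
  have step1 : ∀ j : Fin m, bern n f (x j.succ) - bern n f (x j.castSucc)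
      = ∑ φ : Fin n → Fin (m+2), wgt x n φ * (f (Ypt φ j.succ) - f (Ypt φ j.castSucc)) := by
    intro j
    rw [bern_repr f n x hmono hmem j.succ, bern_repr f n x hmono hmem j.castSucc,
      ← Finset.sum_sub_distrib]
    exact Finset.sum_congr rfl fun φ _ => by rw [← mul_sub]; rfl
  calc ∑ j : Fin m, |bern n f (x j.succ) - bern n f (x j.castSucc)| / l (β j)
      ≤ ∑ j : Fin m,
        (∑ φ : Fin n → Fin (m+2), wgt x n φ * |f (Ypt φ j.succ) - f (Ypt φ j.castSucc)|)
          / l (β j) := by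
        refine Finset.sum_le_sum fun j _ => ?_
        refine div_le_div_of_nonneg_right ?_ (hlpos _).le
        rw [step1 j]
        refine (Finset.abs_sum_le_sum_abs _ _).trans (le_of_eq ?_)
        exact Finset.sum_congr rfl fun φ _ => by rw [abs_mul, abs_of_nonneg (hwnn φ)]
    _ = ∑ φ : Fin n → Fin (m+2),
          wgt x n φ * ∑ j : Fin m, |f (Ypt φ j.succ) - f (Ypt φ j.castSucc)| / l (β j) := by
        simp only [Finset.sum_div]
        rw [Finset.sum_comm]
        refine Finset.sum_congr rfl fun φ _ => ?_
        rw [Finset.mul_sum]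
        exact Finset.sum_congr rfl fun j _ => (mul_div_assoc _ _ _)
    _ ≤ ∑ φ : Fin n → Fin (m+2), wgt x n φ * (lamVar l f).toReal :=
        Finset.sum_le_sum fun φ _ => mul_le_mul_of_nonneg_left
          (partition_sum_le l hlpos f hf (Ypt φ) (Ypt_mono φ) (Ypt_mem φ) β) (hwnn φ)
    _ = (lamVar l f).toReal := by rw [← Finset.sum_mul, wgt_sum, one_mul]

lemma bern_eq_approx (f : ℝ → ℝ) (hc : ContinuousOn f (Set.Icc 0 1)) (n : ℕ)
    (x : ℝ) (hx : x ∈ Set.Icc (0:ℝ) 1) :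
    bern n f x
      = bernsteinApproximation n ⟨(Set.Icc (0:ℝ) 1).restrict f, hc.restrict⟩ ⟨x, hx⟩ := by
  rw [bernsteinApproximation.apply]
  rw [bern, Finset.sum_range (fun k => f ((k:ℝ)/n) * (n.choose k : ℝ) * x^k * (1-x)^(n-k))]
  refine Finset.sum_congr rfl fun k _ => ?_
  rw [bernstein_apply]
  show f ((k:ℝ)/n) * (n.choose (k:ℕ) : ℝ) * x^(k:ℕ) * (1-x)^(n-(k:ℕ))
    = ((n.choose (k:ℕ) : ℝ) * x^(k:ℕ) * (1-x)^(n-(k:ℕ))) * f ((k:ℝ)/n)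
  ring

lemma bern_tendsto_pt (f : ℝ → ℝ) (hc : ContinuousOn f (Set.Icc 0 1)) {x : ℝ}
    (hx : x ∈ Set.Icc (0:ℝ) 1) :
    Tendsto (fun n => bern n f x) atTop (𝓝 (f x)) := by
  set F : C(I, ℝ) := ⟨(Set.Icc (0:ℝ) 1).restrict f, hc.restrict⟩ with hF
  have hU := bernsteinApproximation_uniform F
  have hev : Tendsto (fun n => bernsteinApproximation n F ⟨x, hx⟩) atTop (𝓝 (F ⟨x, hx⟩)) :=
    ((continuous_eval_const (⟨x, hx⟩ : I)).tendsto F).comp hU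
  have heq : (fun n => bern n f x) = fun n => bernsteinApproximation n F ⟨x, hx⟩ :=
    funext fun n => bern_eq_approx f hc n x hx
  rw [heq]
  exact hev

lemma lamVar_le_liminf (l : ℕ → ℝ) (hlpos : ∀ i, 0 < l i) (f : ℝ → ℝ)
    (hc : ContinuousOn f (Set.Icc 0 1)) :
    lamVar l f ≤ Filter.liminf (fun n => lamVar l (bern n f)) Filter.atTop := by
  conv_lhs => rw [lamVar, lamVarOn]
  refine iSup_le fun m => iSup_le fun x => iSup_le fun hmono => iSup_le fun hmem =>
    iSup_le fun β => ?_
  have hr : Tendsto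
      (fun n => ∑ j : Fin m, |bern n f (x j.succ) - bern n f (x j.castSucc)| / l (β j))
      atTop (𝓝 (∑ j : Fin m, |f (x j.succ) - f (x j.castSucc)| / l (β j))) := by
    refine tendsto_finset_sum _ fun j _ => ?_
    exact (((bern_tendsto_pt f hc (hmem j.succ)).sub
      (bern_tendsto_pt f hc (hmem j.castSucc))).abs).div_const _
  have hE := ENNReal.tendsto_ofReal hr
  have hle : ∀ n : ℕ, ENNReal.ofReal
      (∑ j : Fin m, |bern n f (x j.succ) - bern n f (x j.castSucc)| / l (β j))
      ≤ lamVar l (bern n f) := by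
    intro n
    rw [ENNReal.ofReal_sum_of_nonneg (fun j _ => div_nonneg (abs_nonneg _) (hlpos _).le)]
    unfold lamVar lamVarOn
    exact le_iSup_of_le m (le_iSup_of_le x (le_iSup_of_le hmono
      (le_iSup_of_le hmem (le_iSup_of_le β le_rfl))))
  calc ∑ j : Fin m, ENNReal.ofReal (|f (x j.succ) - f (x j.castSucc)| / l (β j))
      = ENNReal.ofReal (∑ j : Fin m, |f (x j.succ) - f (x j.castSucc)| / l (β j)) :=
        (ENNReal.ofReal_sum_of_nonneg (fun j _ => div_nonneg (abs_nonneg _) (hlpos _).le)).symm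
    _ = Filter.liminf (fun n => ENNReal.ofReal
          (∑ j : Fin m, |bern n f (x j.succ) - bern n f (x j.castSucc)| / l (β j)))
          Filter.atTop := hE.liminf_eq.symm
    _ ≤ Filter.liminf (fun n => lamVar l (bern n f)) Filter.atTop :=
        Filter.liminf_le_liminf (Filter.Eventually.of_forall hle)

lemma bern_zero (n : ℕ) (f : ℝ → ℝ) : bern n f 0 = f 0 := by
  rw [bern, Finset.sum_eq_single 0]
  · norm_num
  · intro k _ hk0
    simp [zero_pow hk0]
  · intro h
    exact absurd (Finset.mem_range.mpr (by omega)) h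



end BernLamVarAux

/-- If `Λ` is a Λ-sequence and `f : [0,1] → ℝ` is continuous and of bounded
Λ-variation, then `‖B_n f‖_Λ → ‖f‖_Λ` as `n → ∞`. -/
theorem lamNorm_bernstein_tendsto (l : ℕ → ℝ) (hl : IsLambdaSeq l)
    (f : ℝ → ℝ) (hc : ContinuousOn f (Set.Icc 0 1)) (hf : lamVar l f < ⊤) :
    Tendsto (fun n => lamNorm l (bern n f)) atTop (𝓝 (lamNorm l f)) := by
  obtain ⟨-, hlpos, -⟩ := hl
  have hfne : lamVar l f ≠ ⊤ := hf.ne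
  have hA : lamVar l f ≤ Filter.liminf (fun n => lamVar l (bern n f)) Filter.atTop :=
    lamVar_le_liminf l hlpos f hc
  have hB : Filter.limsup (fun n => lamVar l (bern n f)) Filter.atTop ≤ lamVar l f :=
    Filter.limsup_le_of_le (by isBoundedDefault)
      (Filter.Eventually.of_forall fun n => lamVar_bern_le l hlpos f hfne n)
  have ht : Tendsto (fun n => lamVar l (bern n f)) atTop (𝓝 (lamVar l f)) :=
    tendsto_of_le_liminf_of_limsup_le hA hB
  have ht2 : Tendsto (fun n => lamVar l (bern n f) + ENNReal.ofReal |f 0|) atTop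
      (𝓝 (lamVar l f + ENNReal.ofReal |f 0|)) :=
    ht.add tendsto_const_nhds
  unfold lamNorm
  exact ht2.congr fun n => by rw [bern_zero]
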